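/- If a directed graph G on at least 2 vertices is 1-robust, then G contains a rooted spanning tree (i.e., there exists a vertex from which every other vertex is reachable by a directed path). -/
import Mathlib


/-- A nonempty subset `Q` is `r`-reachable if some vertex in `Q` has at least `r`
in-neighbors outside `Q`. Edge `E j i` means a directed edge from `j` to `i`. -/
def rReachable {V : Type*} (E : V → V → Prop) (r : ℕ) (Q : Set V) : Prop :=
  ∃ i ∈ Q, r ≤ {j | j ∉ Q ∧ E j i}.ncard

/-- A directed graph is `r`-robust if for every pair of nonempty disjoint vertex subsets,
at least one of them is `r`-reachable. -/
def rRobust {V : Type*} (E : V → V → Prop) (r : ℕ) : Prop :=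
  ∀ Qa Qb : Set V, Qa.Nonempty → Qb.Nonempty → Disjoint Qa Qb →
    rReachable E r Qa ∨ rReachable E r Qb

/-- A 1-robust directed graph on at least 2 vertices contains a rooted spanning tree:
some vertex reaches every other vertex by a directed path. -/
theorem one_robust_rooted_spanning_tree {V : Type*} [Fintype V] (E : V → V → Prop)
    (hcard : 2 ≤ Fintype.card V) (h : rRobust E 1) :
    ∃ root : V, ∀ i : V, Relation.ReflTransGen E root i := by
  classical
  -- A v = set of vertices that reach v
  set A : V → Set V := fun v => {u | Relation.ReflTransGen E u v} with hA
  have hmem : ∀ v, v ∈ A v := fun v => Relation.ReflTransGen.refl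
  have hsub : ∀ {u v}, u ∈ A v → A u ⊆ A v := by
    intro u v huv w hw
    exact Relation.ReflTransGen.trans hw huv
  have hclosed : ∀ v, ¬ rReachable E 1 (A v) := by
    rintro v ⟨i, hi, hle⟩
    obtain ⟨j, hj⟩ := Set.nonempty_of_ncard_ne_zero (Nat.one_le_iff_ne_zero.mp hle)
    exact hj.1 (Relation.ReflTransGen.trans (Relation.ReflTransGen.single hj.2) hi)
  have : Nonempty V := Fintype.card_pos_iff.mp (by omega)
  obtain ⟨v, -, hmin⟩ := Finset.exists_min_image Finset.univ
    (fun v => (A v).ncard) ⟨Classical.arbitrary V, Finset.mem_univ _⟩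
  refine ⟨v, fun i => ?_⟩
  by_contra hvi
  have hdisj : Disjoint (A v) (A i) := by
    rw [Set.disjoint_left]
    intro w hwv hwi
    have h1 : A w ⊆ A v := hsub hwv
    have h2 : (A v).ncard ≤ (A w).ncard := hmin w (Finset.mem_univ w)
    have heq : A w = A v := Set.eq_of_subset_of_ncard_le h1 h2 (Set.toFinite _)
    exact hvi (hsub hwi (heq ▸ hmem v))
  rcases h (A v) (A i) ⟨v, hmem v⟩ ⟨i, hmem i⟩ hdisj with hr | hr
  · exact hclosed v hr
  · exact hclosed i hr
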